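/- For the greedy β-transformation T with β = (1+√5)/2 and digit set {0, 3, 4}, the measure ν on [0, 3) with density ψ with respect to Lebesgue measure, where ψ = β⁻¹·1_{[0, 3β−4)} + β⁻²·1_{[0, 3−β)} + β⁻³·1_{[0, 2β−1)} + 1_{[0, 1)} + β⁻¹·1_{[0, β)} + β⁻²·1_{[0, β²)} + β⁻³·1_{[0, β⁻³)} + β⁻⁴·1_{[0, β⁻²)} + β⁻³·1_{[0, β⁻¹)} + 1_{[0, 3)}, is a finite T-invariant measure: ν(T⁻¹E) = ν(E) for every Borel set E ⊆ [0, 3). Hence, after normalization, ν is the absolutely continuous invariant probability measure of T. -/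

import Mathlib

open MeasureTheory Set
open scoped ENNReal

/-- The golden mean `β = (1+√5)/2`. -/
noncomputable def gb : ℝ := (1 + Real.sqrt 5) / 2

lemma gb_sq : gb ^ 2 = gb + 1 := by
  have h5 : Real.sqrt 5 ^ 2 = 5 := Real.sq_sqrt (by norm_num)
  rw [gb]; linear_combination h5 / 4

lemma gb_lb : (1.61 : ℝ) < gb := by
  have h5 : Real.sqrt 5 ^ 2 = 5 := Real.sq_sqrt (by norm_num)
  have h0 := Real.sqrt_nonneg 5
  rw [gb]; nlinarith

lemma gb_ub : gb < (1.62 : ℝ) := by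
  have h5 : Real.sqrt 5 ^ 2 = 5 := Real.sq_sqrt (by norm_num)
  have h0 := Real.sqrt_nonneg 5
  rw [gb]; nlinarith

lemma gb_pos : (0 : ℝ) < gb := by linarith [gb_lb]
lemma gb_ne : gb ≠ 0 := ne_of_gt gb_pos

lemma gb_inv1 : gb⁻¹ = gb - 1 :=
  inv_eq_of_mul_eq_one_right (by linear_combination gb_sq)

lemma gb_inv2 : (gb ^ 2)⁻¹ = 2 - gb :=
  inv_eq_of_mul_eq_one_right (by linear_combination (1 - gb) * gb_sq)

lemma gb_inv3 : (gb ^ 3)⁻¹ = 2 * gb - 3 :=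
  inv_eq_of_mul_eq_one_right (by linear_combination (2 * gb ^ 2 - gb + 1) * gb_sq)

lemma gb_inv4 : (gb ^ 4)⁻¹ = 5 - 3 * gb :=
  inv_eq_of_mul_eq_one_right (by linear_combination (-3 * gb ^ 3 + 2 * gb ^ 2 - gb + 1) * gb_sq)

lemma gb_cube : gb ^ 3 = 2 * gb + 1 := by linear_combination (gb + 1) * gb_sq

lemma gb_inv2' : (gb + 1)⁻¹ = 2 - gb := by rw [← gb_sq]; exact gb_inv2


/-- The greedy β-transformation with `β = (1+√5)/2` and deleted digit set
`A = {0, 3, 4}`: `T x = βx` on `[0, 3/β)`, `T x = βx − 3` on `[3/β, 4/β)`,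
and `T x = βx − 4` on `[4/β, 3)`. -/
noncomputable def Tg (x : ℝ) : ℝ :=
  if x < 3 / gb then gb * x
  else if x < 4 / gb then gb * x - 3
  else gb * x - 4

/-- The density `ψ` of the invariant measure of `T` (up to normalization). -/
noncomputable def psi (x : ℝ) : ℝ :=
  (Set.Ico (0 : ℝ) (3 * gb - 4)).indicator (fun _ => gb⁻¹) x
  + (Set.Ico (0 : ℝ) (3 - gb)).indicator (fun _ => (gb ^ 2)⁻¹) x
  + (Set.Ico (0 : ℝ) (2 * gb - 1)).indicator (fun _ => (gb ^ 3)⁻¹) x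
  + (Set.Ico (0 : ℝ) 1).indicator (fun _ => (1 : ℝ)) x
  + (Set.Ico (0 : ℝ) gb).indicator (fun _ => gb⁻¹) x
  + (Set.Ico (0 : ℝ) (gb ^ 2)).indicator (fun _ => (gb ^ 2)⁻¹) x
  + (Set.Ico (0 : ℝ) ((gb ^ 3)⁻¹)).indicator (fun _ => (gb ^ 3)⁻¹) x
  + (Set.Ico (0 : ℝ) ((gb ^ 2)⁻¹)).indicator (fun _ => (gb ^ 4)⁻¹) x
  + (Set.Ico (0 : ℝ) (gb⁻¹)).indicator (fun _ => (gb ^ 3)⁻¹) x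
  + (Set.Ico (0 : ℝ) 3).indicator (fun _ => (1 : ℝ)) x

lemma psi_eval (x : ℝ) : psi x =
    (if 0 ≤ x ∧ x < 3 * gb - 4 then gb - 1 else 0)
  + (if 0 ≤ x ∧ x < 3 - gb then 2 - gb else 0)
  + (if 0 ≤ x ∧ x < 2 * gb - 1 then 2 * gb - 3 else 0)
  + (if 0 ≤ x ∧ x < 1 then (1 : ℝ) else 0)
  + (if 0 ≤ x ∧ x < gb then gb - 1 else 0)
  + (if 0 ≤ x ∧ x < gb + 1 then 2 - gb else 0)
  + (if 0 ≤ x ∧ x < 2 * gb - 3 then 2 * gb - 3 else 0)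
  + (if 0 ≤ x ∧ x < 2 - gb then 5 - 3 * gb else 0)
  + (if 0 ≤ x ∧ x < gb - 1 then 2 * gb - 3 else 0)
  + (if 0 ≤ x ∧ x < 3 then (1 : ℝ) else 0) := by
  simp only [psi, Set.indicator_apply, Set.mem_Ico, gb_inv1, gb_inv2, gb_inv3, gb_inv4, gb_sq,
    gb_inv2']

lemma if_nonneg' (p : Prop) [Decidable p] (c : ℝ) (hc : 0 ≤ c) : 0 ≤ (if p then c else 0) := by
  split_ifs <;> simp [hc]

lemma if_le_one (p : Prop) [Decidable p] (c : ℝ) (hc : c ≤ 1) : (if p then c else 0) ≤ 1 := by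
  split_ifs <;> linarith

lemma psi_nonneg (x : ℝ) : 0 ≤ psi x := by
  have h1 := gb_lb; have h2 := gb_ub
  rw [psi_eval]
  linarith [if_nonneg' (0 ≤ x ∧ x < 3 * gb - 4) (gb - 1) (by linarith),
    if_nonneg' (0 ≤ x ∧ x < 3 - gb) (2 - gb) (by linarith),
    if_nonneg' (0 ≤ x ∧ x < 2 * gb - 1) (2 * gb - 3) (by linarith),
    if_nonneg' (0 ≤ x ∧ x < 1) (1 : ℝ) (by linarith),
    if_nonneg' (0 ≤ x ∧ x < gb) (gb - 1) (by linarith),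
    if_nonneg' (0 ≤ x ∧ x < gb + 1) (2 - gb) (by linarith),
    if_nonneg' (0 ≤ x ∧ x < 2 * gb - 3) (2 * gb - 3) (by linarith),
    if_nonneg' (0 ≤ x ∧ x < 2 - gb) (5 - 3 * gb) (by linarith),
    if_nonneg' (0 ≤ x ∧ x < gb - 1) (2 * gb - 3) (by linarith),
    if_nonneg' (0 ≤ x ∧ x < 3) (1 : ℝ) (by linarith)]

lemma psi_le (x : ℝ) : psi x ≤ 10 := by
  have h1 := gb_lb; have h2 := gb_ub
  rw [psi_eval]
  linarith [if_le_one (0 ≤ x ∧ x < 3 * gb - 4) (gb - 1) (by linarith),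
    if_le_one (0 ≤ x ∧ x < 3 - gb) (2 - gb) (by linarith),
    if_le_one (0 ≤ x ∧ x < 2 * gb - 1) (2 * gb - 3) (by linarith),
    if_le_one (0 ≤ x ∧ x < 1) (1 : ℝ) (by linarith),
    if_le_one (0 ≤ x ∧ x < gb) (gb - 1) (by linarith),
    if_le_one (0 ≤ x ∧ x < gb + 1) (2 - gb) (by linarith),
    if_le_one (0 ≤ x ∧ x < 2 * gb - 3) (2 * gb - 3) (by linarith),
    if_le_one (0 ≤ x ∧ x < 2 - gb) (5 - 3 * gb) (by linarith),
    if_le_one (0 ≤ x ∧ x < gb - 1) (2 * gb - 3) (by linarith),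
    if_le_one (0 ≤ x ∧ x < 3) (1 : ℝ) (by linarith)]

lemma psi_zero (x : ℝ) (hx : x ∉ Set.Ico (0:ℝ) 3) : psi x = 0 := by
  have h1 := gb_lb; have h2 := gb_ub
  rw [Set.mem_Ico, not_and_or, not_le, not_lt] at hx
  rw [psi_eval]
  rcases hx with hx | hx
  · simp [hx.not_ge]
  · have a1 : ¬ (x < 3 * gb - 4) := by linarith
    have a2 : ¬ (x < 3 - gb) := by linarith
    have a3 : ¬ (x < 2 * gb - 1) := by linarith
    have a4 : ¬ (x < 1) := by linarith
    have a5 : ¬ (x < gb) := by linarith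
    have a6 : ¬ (x < gb + 1) := by linarith
    have a7 : ¬ (x < 2 * gb - 3) := by linarith
    have a8 : ¬ (x < 2 - gb) := by linarith
    have a9 : ¬ (x < gb - 1) := by linarith
    have a10 : ¬ (x < 3) := by linarith
    simp [a1, a2, a3, a4, a5, a6, a7, a8, a9, a10]

lemma evalself (y : ℝ) (h0 : 0 ≤ y) (h3 : y < 3) : psi y =
    (if y < 3 * gb - 4 then gb - 1 else 0)
  + (if y < 3 - gb then 2 - gb else 0)
  + (if y < 2 * gb - 1 then 2 * gb - 3 else 0)
  + (if y < 1 then (1 : ℝ) else 0)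
  + (if y < gb then gb - 1 else 0)
  + (if y < gb + 1 then 2 - gb else 0)
  + (if y < 2 * gb - 3 then 2 * gb - 3 else 0)
  + (if y < 2 - gb then 5 - 3 * gb else 0)
  + (if y < gb - 1 then 2 * gb - 3 else 0)
  + 1 := by
  rw [psi_eval]
  simp only [h0, true_and]
  rw [if_pos h3]

lemma eval0 (y : ℝ) (h0 : 0 ≤ y) (h3 : y < 3) : psi (y / gb) =
    (if y < 3 - gb then gb - 1 else 0)
  + (if y < 2 * gb - 1 then 2 - gb else 0)
  + (2 * gb - 3)
  + (if y < gb then (1 : ℝ) else 0)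
  + (if y < gb + 1 then gb - 1 else 0)
  + (2 - gb)
  + (if y < 2 - gb then 2 * gb - 3 else 0)
  + (if y < gb - 1 then 5 - 3 * gb else 0)
  + (if y < 1 then 2 * gb - 3 else 0)
  + 1 := by
  have hg := gb_pos; have h1 := gb_lb; have h2 := gb_ub
  have hd : 0 ≤ y / gb := div_nonneg h0 hg.le
  rw [psi_eval]
  simp only [hd, true_and, div_lt_iff₀ hg]
  rw [show (3 * gb - 4) * gb = 3 - gb from by linear_combination 3 * gb_sq,
    show (3 - gb) * gb = 2 * gb - 1 from by linear_combination (-1) * gb_sq,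
    show (2 * gb - 1) * gb = gb + 2 from by linear_combination 2 * gb_sq,
    one_mul,
    show gb * gb = gb + 1 from by linear_combination gb_sq,
    show (gb + 1) * gb = 2 * gb + 1 from by linear_combination gb_sq,
    show (2 * gb - 3) * gb = 2 - gb from by linear_combination 2 * gb_sq,
    show (2 - gb) * gb = gb - 1 from by linear_combination (-1) * gb_sq,
    show (gb - 1) * gb = 1 from by linear_combination gb_sq]
  rw [if_pos (show y < gb + 2 by linarith), if_pos (show y < 2 * gb + 1 by linarith),
    if_pos (show y < 3 * gb by linarith)]

lemma eval3 (y : ℝ) (h0 : 0 ≤ y) (h1y : y < 1) : psi ((y + 3) / gb) =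
    (if y < gb - 1 then 2 * gb - 3 else 0) + (2 - gb) + 1 := by
  have hg := gb_pos; have h1 := gb_lb; have h2 := gb_ub
  have hd : 0 ≤ (y + 3) / gb := div_nonneg (by linarith) hg.le
  rw [psi_eval]
  simp only [hd, true_and, div_lt_iff₀ hg]
  rw [show (3 * gb - 4) * gb = 3 - gb from by linear_combination 3 * gb_sq,
    show (3 - gb) * gb = 2 * gb - 1 from by linear_combination (-1) * gb_sq,
    show (2 * gb - 1) * gb = gb + 2 from by linear_combination 2 * gb_sq,
    one_mul,
    show gb * gb = gb + 1 from by linear_combination gb_sq,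
    show (gb + 1) * gb = 2 * gb + 1 from by linear_combination gb_sq,
    show (2 * gb - 3) * gb = 2 - gb from by linear_combination 2 * gb_sq,
    show (2 - gb) * gb = gb - 1 from by linear_combination (-1) * gb_sq,
    show (gb - 1) * gb = 1 from by linear_combination gb_sq]
  rw [if_neg (show ¬ (y + 3 < 3 - gb) by push_neg; linarith),
    if_neg (show ¬ (y + 3 < 2 * gb - 1) by push_neg; linarith),
    if_neg (show ¬ (y + 3 < gb) by push_neg; linarith),
    if_neg (show ¬ (y + 3 < gb + 1) by push_neg; linarith),
    if_pos (show y + 3 < 2 * gb + 1 by linarith),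
    if_neg (show ¬ (y + 3 < 2 - gb) by push_neg; linarith),
    if_neg (show ¬ (y + 3 < gb - 1) by push_neg; linarith),
    if_neg (show ¬ (y + 3 < 1) by push_neg; linarith),
    if_pos (show y + 3 < 3 * gb by linarith)]
  simp only [show (y + 3 < gb + 2) ↔ (y < gb - 1) from by constructor <;> intro <;> linarith]
  ring

lemma eval4 (y : ℝ) (h0 : 0 ≤ y) (h3 : y < 3) : psi ((y + 4) / gb) =
    (if y < 2 * gb - 3 then 2 - gb else 0) + (if y < 3 * gb - 4 then (1 : ℝ) else 0) := by
  have hg := gb_pos; have h1 := gb_lb; have h2 := gb_ub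
  have hd : 0 ≤ (y + 4) / gb := div_nonneg (by linarith) hg.le
  rw [psi_eval]
  simp only [hd, true_and, div_lt_iff₀ hg]
  rw [show (3 * gb - 4) * gb = 3 - gb from by linear_combination 3 * gb_sq,
    show (3 - gb) * gb = 2 * gb - 1 from by linear_combination (-1) * gb_sq,
    show (2 * gb - 1) * gb = gb + 2 from by linear_combination 2 * gb_sq,
    one_mul,
    show gb * gb = gb + 1 from by linear_combination gb_sq,
    show (gb + 1) * gb = 2 * gb + 1 from by linear_combination gb_sq,
    show (2 * gb - 3) * gb = 2 - gb from by linear_combination 2 * gb_sq,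
    show (2 - gb) * gb = gb - 1 from by linear_combination (-1) * gb_sq,
    show (gb - 1) * gb = 1 from by linear_combination gb_sq]
  rw [if_neg (show ¬ (y + 4 < 3 - gb) by push_neg; linarith),
    if_neg (show ¬ (y + 4 < 2 * gb - 1) by push_neg; linarith),
    if_neg (show ¬ (y + 4 < gb + 2) by push_neg; linarith),
    if_neg (show ¬ (y + 4 < gb) by push_neg; linarith),
    if_neg (show ¬ (y + 4 < gb + 1) by push_neg; linarith),
    if_neg (show ¬ (y + 4 < 2 - gb) by push_neg; linarith),
    if_neg (show ¬ (y + 4 < gb - 1) by push_neg; linarith),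
    if_neg (show ¬ (y + 4 < 1) by push_neg; linarith)]
  simp only [show (y + 4 < 2 * gb + 1) ↔ (y < 2 * gb - 3) from by constructor <;> intro <;> linarith,
    show (y + 4 < 3 * gb) ↔ (y < 3 * gb - 4) from by constructor <;> intro <;> linarith]
  ring

set_option maxHeartbeats 2000000 in
lemma key (y : ℝ) (h0 : 0 ≤ y) (h3 : y < 3) :
    psi (y / gb) + (if y < 1 then psi ((y + 3) / gb) else 0) + psi ((y + 4) / gb)
      = gb * psi y := by
  have h1 := gb_lb; have h2 := gb_ub; have hsq := gb_sq
  rw [eval0 y h0 h3, eval4 y h0 h3, evalself y h0 h3]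
  by_cases hy : y < 1
  · rw [if_pos hy, eval3 y h0 hy]
    split_ifs <;> linarith
  · rw [if_neg hy]
    split_ifs <;> linarith

/-- The measure `ν` on `[0, 3)` with density `ψ` with respect to Lebesgue
measure. -/
noncomputable def nuMeas : Measure ℝ :=
  volume.withDensity fun x => ENNReal.ofReal (psi x)

noncomputable def piece0 (E : Set ℝ) (y : ℝ) : ℝ≥0∞ :=
  E.indicator (fun z => if z / gb < 3 / gb then ENNReal.ofReal (psi (z / gb)) else 0) y

noncomputable def piece1 (E : Set ℝ) (y : ℝ) : ℝ≥0∞ :=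
  E.indicator (fun z => if 3 / gb ≤ (z + 3) / gb ∧ (z + 3) / gb < 4 / gb then
    ENNReal.ofReal (psi ((z + 3) / gb)) else 0) y

noncomputable def piece2 (E : Set ℝ) (y : ℝ) : ℝ≥0∞ :=
  E.indicator (fun z => if 3 / gb ≤ (z + 4) / gb ∧ 4 / gb ≤ (z + 4) / gb then
    ENNReal.ofReal (psi ((z + 4) / gb)) else 0) y

lemma psi_meas : Measurable psi := by
  unfold psi
  refine ((((((((Measurable.add ?_ ?_).add ?_).add ?_).add ?_).add ?_).add ?_).add ?_).add
    ?_).add ?_ <;>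
    exact measurable_const.indicator measurableSet_Ico

lemma m_piece0 (E : Set ℝ) (hEm : MeasurableSet E) : Measurable (piece0 E) := by
  unfold piece0
  apply Measurable.indicator _ hEm
  exact Measurable.ite (measurableSet_lt (measurable_id.div_const gb) measurable_const)
    ((psi_meas.comp (measurable_id.div_const gb)).ennreal_ofReal) measurable_const

lemma m_piece1 (E : Set ℝ) (hEm : MeasurableSet E) : Measurable (piece1 E) := by
  unfold piece1
  apply Measurable.indicator _ hEm
  refine Measurable.ite ?_
    ((psi_meas.comp ((measurable_id.add_const 3).div_const gb)).ennreal_ofReal) measurable_const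
  exact (measurableSet_le measurable_const ((measurable_id.add_const 3).div_const gb)).inter
    (measurableSet_lt ((measurable_id.add_const 3).div_const gb) measurable_const)

lemma m_piece2 (E : Set ℝ) (hEm : MeasurableSet E) : Measurable (piece2 E) := by
  unfold piece2
  apply Measurable.indicator _ hEm
  refine Measurable.ite ?_
    ((psi_meas.comp ((measurable_id.add_const 4).div_const gb)).ennreal_ofReal) measurable_const
  exact (measurableSet_le measurable_const ((measurable_id.add_const 4).div_const gb)).inter
    (measurableSet_le measurable_const ((measurable_id.add_const 4).div_const gb))

lemma hsplit (E : Set ℝ) (x : ℝ) :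
    (Tg ⁻¹' E).indicator (fun x => ENNReal.ofReal (psi x)) x
      = piece0 E (gb * x) + piece1 E (gb * x - 3) + piece2 E (gb * x - 4) := by
  have e0 : gb * x / gb = x := mul_div_cancel_left₀ x gb_ne
  have e1 : (gb * x - 3 + 3) / gb = x := by rw [show gb * x - 3 + 3 = gb * x from by ring, e0]
  have e2 : (gb * x - 4 + 4) / gb = x := by rw [show gb * x - 4 + 4 = gb * x from by ring, e0]
  classical
  simp only [piece0, piece1, piece2, Set.indicator_apply, Set.mem_preimage, e0, e1, e2, Tg]
  by_cases hA : x < 3 / gb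
  · simp [hA, not_le.mpr hA]
  · by_cases hB : x < 4 / gb
    · simp [hA, hB, le_of_not_gt hA, not_le.mpr hB]
    · simp [hA, hB, le_of_not_gt hA, le_of_not_gt hB]

lemma lint_scale (F : ℝ → ℝ≥0∞) (hF : Measurable F) (d : ℝ) :
    ∫⁻ x, F (gb * x - d) = ENNReal.ofReal gb⁻¹ * ∫⁻ y, F y := by
  have h1 : ∫⁻ y, F (y - d) ∂(Measure.map (gb * ·) volume) = ∫⁻ x, F (gb * x - d) ∂volume :=
    lintegral_map (hF.comp (measurable_id.sub_const d)) (measurable_const_mul gb)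
  rw [← h1, Real.map_volume_mul_left gb_ne, lintegral_smul_measure,
    abs_of_pos (inv_pos.mpr gb_pos), lintegral_sub_right_eq_self (fun y => F y) d, smul_eq_mul]

lemma hpt (E : Set ℝ) (hE : E ⊆ Set.Ico 0 3) (y : ℝ) :
    ENNReal.ofReal gb⁻¹ * (piece0 E y + piece1 E y + piece2 E y)
      = E.indicator (fun x => ENNReal.ofReal (psi x)) y := by
  have hg := gb_pos; have h1 := gb_lb; have h2 := gb_ub
  by_cases hy : y ∈ E
  · obtain ⟨h0, h3⟩ := hE hy
    simp only [piece0, piece1, piece2, Set.indicator_of_mem hy]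
    have c0 : y / gb < 3 / gb := by rw [div_lt_div_iff₀ hg hg]; nlinarith
    have c1 : (3 / gb ≤ (y + 3) / gb ∧ (y + 3) / gb < 4 / gb) ↔ y < 1 := by
      rw [div_le_div_iff₀ hg hg, div_lt_div_iff₀ hg hg]
      constructor
      · rintro ⟨a, b⟩; nlinarith
      · intro hy1; exact ⟨by nlinarith, by nlinarith⟩
    have c2 : (3 / gb ≤ (y + 4) / gb ∧ 4 / gb ≤ (y + 4) / gb) := by
      rw [div_le_div_iff₀ hg hg, div_le_div_iff₀ hg hg]
      exact ⟨by nlinarith, by nlinarith⟩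
    rw [if_pos c0, if_pos c2]
    simp only [c1]
    have hnn : 0 ≤ (if y < 1 then psi ((y + 3) / gb) else 0) := by
      split_ifs
      · exact psi_nonneg _
      · exact le_rfl
    have hif : (if y < 1 then ENNReal.ofReal (psi ((y + 3) / gb)) else 0)
        = ENNReal.ofReal (if y < 1 then psi ((y + 3) / gb) else 0) := by
      split_ifs <;> simp
    rw [hif, ← ENNReal.ofReal_add (psi_nonneg _) hnn,
      ← ENNReal.ofReal_add (add_nonneg (psi_nonneg _) hnn) (psi_nonneg _),
      ← ENNReal.ofReal_mul (by positivity : (0:ℝ) ≤ gb⁻¹),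
      key y h0 h3, inv_mul_cancel_left₀ gb_ne]
  · simp only [piece0, piece1, piece2, Set.indicator_of_notMem hy]
    simp


/-- `ν` is a finite `T`-invariant measure: `ν(T⁻¹E) = ν(E)` for
every Borel `E ⊆ [0, 3)`. Hence, after normalization, `ν` is the absolutely
continuous invariant probability measure of `T`. -/
theorem stmt19 :
    IsFiniteMeasure nuMeas ∧
    ∀ E : Set ℝ, E ⊆ Set.Ico 0 3 → MeasurableSet E →
      nuMeas (Tg ⁻¹' E) = nuMeas E := by
  have hTm : Measurable Tg := by
    unfold Tg
    exact Measurable.ite (measurableSet_lt measurable_id measurable_const)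
      (measurable_const_mul gb)
      (Measurable.ite (measurableSet_lt measurable_id measurable_const)
        ((measurable_const_mul gb).sub_const 3)
        ((measurable_const_mul gb).sub_const 4))
  constructor
  · constructor
    rw [nuMeas, withDensity_apply _ MeasurableSet.univ, Measure.restrict_univ]
    calc ∫⁻ x, ENNReal.ofReal (psi x) ∂volume
        ≤ ∫⁻ x, (Set.Ico (0:ℝ) 3).indicator (fun _ => (10:ℝ≥0∞)) x ∂volume := by
          apply lintegral_mono
          intro x
          by_cases hx : x ∈ Set.Ico (0:ℝ) 3
          · rw [Set.indicator_of_mem hx]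
            calc ENNReal.ofReal (psi x) ≤ ENNReal.ofReal 10 :=
                  ENNReal.ofReal_le_ofReal (psi_le x)
              _ = 10 := by norm_num
          · simp [Set.indicator_of_notMem hx, psi_zero x hx]
      _ = 10 * volume (Set.Ico (0:ℝ) 3) := by
          rw [lintegral_indicator measurableSet_Ico, setLIntegral_const]
      _ < ⊤ := by
          rw [Real.volume_Ico]
          exact ENNReal.mul_lt_top (by norm_num) ENNReal.ofReal_lt_top
  · intro E hE hEm
    have hm0 := m_piece0 E hEm
    have hm1 := m_piece1 E hEm
    have hm2 := m_piece2 E hEm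
    have hc0 : Measurable fun x => piece0 E (gb * x) := hm0.comp (measurable_const_mul gb)
    have hc1 : Measurable fun x => piece1 E (gb * x - 3) :=
      hm1.comp ((measurable_const_mul gb).sub_const 3)
    have hc2 : Measurable fun x => piece2 E (gb * x - 4) :=
      hm2.comp ((measurable_const_mul gb).sub_const 4)
    calc nuMeas (Tg ⁻¹' E)
        = ∫⁻ x in Tg ⁻¹' E, ENNReal.ofReal (psi x) ∂volume := by
          rw [nuMeas, withDensity_apply _ (hTm hEm)]
      _ = ∫⁻ x, (Tg ⁻¹' E).indicator (fun x => ENNReal.ofReal (psi x)) x ∂volume :=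
          (lintegral_indicator (hTm hEm) _).symm
      _ = ∫⁻ x, (piece0 E (gb * x) + piece1 E (gb * x - 3) + piece2 E (gb * x - 4)) ∂volume :=
          lintegral_congr (hsplit E)
      _ = (∫⁻ x, piece0 E (gb * x)) + (∫⁻ x, piece1 E (gb * x - 3))
            + (∫⁻ x, piece2 E (gb * x - 4)) := by
          rw [lintegral_add_left (f := fun x => piece0 E (gb * x) + piece1 E (gb * x - 3)) (hc0.add hc1), lintegral_add_left hc0]
      _ = ENNReal.ofReal gb⁻¹ * (∫⁻ y, piece0 E y) + ENNReal.ofReal gb⁻¹ * (∫⁻ y, piece1 E y)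
            + ENNReal.ofReal gb⁻¹ * (∫⁻ y, piece2 E y) := by
          rw [show (fun x => piece0 E (gb * x)) = fun x => piece0 E (gb * x - 0) from
            by funext x; rw [sub_zero]]
          rw [lint_scale _ hm0 0, lint_scale _ hm1 3, lint_scale _ hm2 4]
      _ = ENNReal.ofReal gb⁻¹ * ((∫⁻ y, piece0 E y) + (∫⁻ y, piece1 E y) + (∫⁻ y, piece2 E y)) := by
          ring
      _ = ENNReal.ofReal gb⁻¹ * ∫⁻ y, (piece0 E y + piece1 E y + piece2 E y) ∂volume := by
          rw [lintegral_add_left (f := fun y => piece0 E y + piece1 E y) (hm0.add hm1), lintegral_add_left hm0]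
      _ = ∫⁻ y, ENNReal.ofReal gb⁻¹ * (piece0 E y + piece1 E y + piece2 E y) ∂volume :=
          (lintegral_const_mul _ ((hm0.add hm1).add hm2)).symm
      _ = ∫⁻ y, E.indicator (fun x => ENNReal.ofReal (psi x)) y ∂volume :=
          lintegral_congr (hpt E hE)
      _ = ∫⁻ y in E, ENNReal.ofReal (psi y) ∂volume := lintegral_indicator hEm _
      _ = nuMeas E := by rw [nuMeas, withDensity_apply _ hEm]
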